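/- For any two k-heights X, Y of a finite graph G, the minimum number of single-vertex ±1 moves (each intermediate configuration being a valid k-height) needed to transform X into Y equals δ(X,Y) = Σ_{v∈V} |X(v)−Y(v)|. -/
import Mathlib

def IsKHeight {V : Type*} (G : SimpleGraph V) (k : ℕ) (φ : V → ℕ) : Prop :=
  (∀ v, φ v ≤ k) ∧ ∀ ⦃v w : V⦄, G.Adj v w → |(φ v : ℤ) - (φ w : ℤ)| ≤ 1

def HeightStep {V : Type*} (G : SimpleGraph V) (k : ℕ) (X Y : V → ℕ) : Prop :=
  IsKHeight G k X ∧ IsKHeight G k Y ∧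
    ∃ v, (∀ w, w ≠ v → Y w = X w) ∧ (Y v = X v + 1 ∨ X v = Y v + 1)

def heightDist {V : Type*} [Fintype V] (X Y : V → ℕ) : ℕ :=
  ∑ v : V, ((X v : ℤ) - (Y v : ℤ)).natAbs

lemma heightDist_split {V : Type*} [Fintype V] [DecidableEq V] (A Y : V → ℕ) (v : V) :
    heightDist A Y = ((A v : ℤ) - (Y v : ℤ)).natAbs +
      ∑ w ∈ Finset.univ.erase v, ((A w : ℤ) - (Y w : ℤ)).natAbs :=
  (Finset.add_sum_erase _ _ (Finset.mem_univ v)).symm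

lemma step_down {V : Type*} [Fintype V] [DecidableEq V] (G : SimpleGraph V) (k : ℕ) (X Y : V → ℕ)
    (hX : IsKHeight G k X) (hY : IsKHeight G k Y) (v : V) (hv : Y v < X v)
    (hmax : ∀ w, Y w < X w → X w ≤ X v) :
    HeightStep G k X (Function.update X v (X v - 1)) ∧
      heightDist (Function.update X v (X v - 1)) Y + 1 = heightDist X Y := by
  have hX' : IsKHeight G k (Function.update X v (X v - 1)) := by
    constructor
    · intro w
      rcases eq_or_ne w v with rfl | hw
      · simp only [Function.update_self]; have := hX.1 w; omega
      · simp only [Function.update_of_ne hw]; exact hX.1 w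
    · intro a b hab
      have h1 := hX.2 hab
      have h2 := hY.2 hab
      have hXv : Function.update X v (X v - 1) v = X v - 1 := Function.update_self _ _ _
      have hXw : ∀ w, w ≠ v → Function.update X v (X v - 1) w = X w :=
        fun w hw => Function.update_of_ne hw _ _
      by_cases ha : a = v
      · by_cases hb : b = v
        · exact absurd (ha.trans hb.symm) hab.ne
        · rw [ha] at h1 h2 ⊢
          rw [hXv, hXw b hb]
          rw [abs_le] at h1 h2 ⊢
          have h3 : X b ≤ X v ∨ X b ≤ Y b := by
            by_cases hb2 : Y b < X b
            · exact Or.inl (hmax b hb2)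
            · exact Or.inr (by omega)
          rcases h3 with h3 | h3 <;> constructor <;> omega
      · by_cases hb : b = v
        · rw [hb] at h1 h2 ⊢
          rw [hXv, hXw a ha]
          rw [abs_le] at h1 h2 ⊢
          have h3 : X a ≤ X v ∨ X a ≤ Y a := by
            by_cases ha2 : Y a < X a
            · exact Or.inl (hmax a ha2)
            · exact Or.inr (by omega)
          rcases h3 with h3 | h3 <;> constructor <;> omega
        · rw [hXw a ha, hXw b hb]
          exact h1
  refine ⟨⟨hX, hX', v, fun w hw => Function.update_of_ne hw _ _, Or.inr ?_⟩, ?_⟩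
  · simp only [Function.update_self]; omega
  · rw [heightDist_split _ Y v, heightDist_split X Y v]
    have hrest : ∑ w ∈ Finset.univ.erase v,
        ((Function.update X v (X v - 1) w : ℤ) - (Y w : ℤ)).natAbs =
        ∑ w ∈ Finset.univ.erase v, ((X w : ℤ) - (Y w : ℤ)).natAbs := by
      refine Finset.sum_congr rfl fun w hw => ?_
      rw [Function.update_of_ne (Finset.ne_of_mem_erase hw)]
    rw [hrest]
    simp only [Function.update_self]
    omega

lemma step_up {V : Type*} [Fintype V] [DecidableEq V] (G : SimpleGraph V) (k : ℕ) (X Y : V → ℕ)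
    (hX : IsKHeight G k X) (hY : IsKHeight G k Y) (v : V) (hv : X v < Y v)
    (hmin : ∀ w, X w < Y w → X v ≤ X w) :
    HeightStep G k X (Function.update X v (X v + 1)) ∧
      heightDist (Function.update X v (X v + 1)) Y + 1 = heightDist X Y := by
  have hX' : IsKHeight G k (Function.update X v (X v + 1)) := by
    constructor
    · intro w
      rcases eq_or_ne w v with rfl | hw
      · simp only [Function.update_self]; have := hY.1 w; omega
      · simp only [Function.update_of_ne hw]; exact hX.1 w
    · intro a b hab
      have h1 := hX.2 hab
      have h2 := hY.2 hab
      have hXv : Function.update X v (X v + 1) v = X v + 1 := Function.update_self _ _ _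
      have hXw : ∀ w, w ≠ v → Function.update X v (X v + 1) w = X w :=
        fun w hw => Function.update_of_ne hw _ _
      by_cases ha : a = v
      · by_cases hb : b = v
        · exact absurd (ha.trans hb.symm) hab.ne
        · rw [ha] at h1 h2 ⊢
          rw [hXv, hXw b hb]
          rw [abs_le] at h1 h2 ⊢
          have h3 : X v ≤ X b ∨ Y b ≤ X b := by
            by_cases hb2 : X b < Y b
            · exact Or.inl (hmin b hb2)
            · exact Or.inr (by omega)
          rcases h3 with h3 | h3 <;> constructor <;> omega
      · by_cases hb : b = v
        · rw [hb] at h1 h2 ⊢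
          rw [hXv, hXw a ha]
          rw [abs_le] at h1 h2 ⊢
          have h3 : X v ≤ X a ∨ Y a ≤ X a := by
            by_cases ha2 : X a < Y a
            · exact Or.inl (hmin a ha2)
            · exact Or.inr (by omega)
          rcases h3 with h3 | h3 <;> constructor <;> omega
        · rw [hXw a ha, hXw b hb]
          exact h1
  refine ⟨⟨hX, hX', v, fun w hw => Function.update_of_ne hw _ _, Or.inl ?_⟩, ?_⟩
  · simp only [Function.update_self]
  · rw [heightDist_split _ Y v, heightDist_split X Y v]
    have hrest : ∑ w ∈ Finset.univ.erase v,
        ((Function.update X v (X v + 1) w : ℤ) - (Y w : ℤ)).natAbs =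
        ∑ w ∈ Finset.univ.erase v, ((X w : ℤ) - (Y w : ℤ)).natAbs := by
      refine Finset.sum_congr rfl fun w hw => ?_
      rw [Function.update_of_ne (Finset.ne_of_mem_erase hw)]
    rw [hrest]
    simp only [Function.update_self]
    omega

lemma exists_path {V : Type*} [Fintype V] [DecidableEq V] (G : SimpleGraph V) (k : ℕ) (Y : V → ℕ)
    (hY : IsKHeight G k Y) :
    ∀ n (X : V → ℕ), IsKHeight G k X → heightDist X Y = n →
      ∃ f : ℕ → V → ℕ, f 0 = X ∧ f n = Y ∧ ∀ i < n, HeightStep G k (f i) (f (i + 1)) := by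
  intro n
  induction n with
  | zero =>
    intro X hX hd
    have hXY : X = Y := by
      funext w
      have := Finset.sum_eq_zero_iff.mp hd w (Finset.mem_univ w)
      omega
    exact ⟨fun _ => Y, hXY.symm ▸ rfl, rfl, fun i hi => absurd hi (Nat.not_lt_zero i)⟩
  | succ n ih =>
    intro X hX hd
    classical
    -- find a move
    obtain ⟨X', hstep, hdist⟩ :
        ∃ X', HeightStep G k X X' ∧ heightDist X' Y + 1 = heightDist X Y := by
      by_cases hS : (Finset.univ.filter (fun w => Y w < X w)).Nonempty
      · obtain ⟨v, hvmem, hvmax⟩ := Finset.exists_max_image _ X hS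
        simp only [Finset.mem_filter] at hvmem
        have := step_down G k X Y hX hY v hvmem.2
          (fun w hw => hvmax w (Finset.mem_filter.mpr ⟨Finset.mem_univ w, hw⟩))
        exact ⟨_, this.1, this.2⟩
      · have hT : (Finset.univ.filter (fun w => X w < Y w)).Nonempty := by
          by_contra hT
          have hall : ∀ w, X w = Y w := by
            intro w
            have h1 : ¬ Y w < X w := fun h => hS ⟨w, Finset.mem_filter.mpr ⟨Finset.mem_univ w, h⟩⟩
            have h2 : ¬ X w < Y w := fun h => hT ⟨w, Finset.mem_filter.mpr ⟨Finset.mem_univ w, h⟩⟩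
            omega
          have : heightDist X Y = 0 :=
            Finset.sum_eq_zero fun w _ => by rw [hall w]; simp
          omega
        obtain ⟨v, hvmem, hvmin⟩ := Finset.exists_min_image _ X hT
        simp only [Finset.mem_filter] at hvmem
        have := step_up G k X Y hX hY v hvmem.2
          (fun w hw => hvmin w (Finset.mem_filter.mpr ⟨Finset.mem_univ w, hw⟩))
        exact ⟨_, this.1, this.2⟩
    obtain ⟨g, hg0, hgn, hgstep⟩ := ih X' hstep.2.1 (by omega)
    refine ⟨fun i => if i = 0 then X else g (i - 1), rfl, by simp [hgn], ?_⟩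
    intro i hi
    rcases Nat.eq_zero_or_pos i with rfl | hpos
    · simpa [hg0] using hstep
    · have h1 : i ≠ 0 := hpos.ne'
      simp only [h1, if_false, Nat.add_eq_zero, and_false, if_false]
      have : i - 1 + 1 = i := by omega
      have h3 : i + 1 - 1 = i - 1 + 1 := by omega
      rw [h3]
      exact hgstep (i - 1) (by omega)

lemma step_dist_le {V : Type*} [Fintype V] [DecidableEq V] (G : SimpleGraph V) (k : ℕ) (Y A B : V → ℕ)
    (h : HeightStep G k A B) : heightDist A Y ≤ heightDist B Y + 1 := by
  obtain ⟨_, _, v, hoff, hv⟩ := h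
  rw [heightDist_split A Y v, heightDist_split B Y v]
  have hrest : ∑ w ∈ Finset.univ.erase v, ((A w : ℤ) - (Y w : ℤ)).natAbs =
      ∑ w ∈ Finset.univ.erase v, ((B w : ℤ) - (Y w : ℤ)).natAbs := by
    refine Finset.sum_congr rfl fun w hw => ?_
    rw [hoff w (Finset.ne_of_mem_erase hw)]
  rw [hrest]
  omega

theorem heightDist_eq_min_moves {V : Type*} [Fintype V]
    (G : SimpleGraph V) (k : ℕ) (X Y : V → ℕ)
    (hX : IsKHeight G k X) (hY : IsKHeight G k Y) :
    IsLeast {n : ℕ | ∃ f : ℕ → V → ℕ, f 0 = X ∧ f n = Y ∧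
        ∀ i < n, HeightStep G k (f i) (f (i + 1))}
      (heightDist X Y) := by
  classical
  constructor
  · exact exists_path G k Y hY (heightDist X Y) X hX rfl
  · rintro n ⟨f, h0, hn, hstep⟩
    have key : ∀ j, j ≤ n → heightDist (f (n - j)) Y ≤ j := by
      intro j
      induction j with
      | zero =>
        intro _
        simp only [Nat.sub_zero, hn]
        have : heightDist Y Y = 0 := Finset.sum_eq_zero fun w _ => by simp
        omega
      | succ j ihj =>
        intro hj
        have h1 : n - (j + 1) + 1 = n - j := by omega
        have h2 := step_dist_le G k Y (f (n - (j + 1))) (f (n - (j + 1) + 1))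
          (hstep _ (by omega))
        rw [h1] at h2
        have := ihj (by omega)
        omega
    have := key n le_rfl
    simpa [h0] using this
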